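/- arXiv:0910.0535 — 2 statements merged into one kernel-verified Lean document; each statement's English description precedes it below -/
import Mathlib

section
/- Let S and T be monoids with zeros, λ₂ ≥ λ₁ ≥ 1 cardinals, and σ : B⁰_{λ₁}(S) → B⁰_{λ₂}(T) a non-trivial homomorphism. Suppose T does not contain the semigroup of 2×2-matrix units (T has the B*-property). If for some α, β ∈ I_{λ₁} and s ∈ S the image σ(α,s,β) is a non-zero element of B⁰_{λ₂}(T), then σ(α₁,s,β₁) is non-zero for all α₁, β₁ ∈ I_{λ₁}. -/
attribute [local instance] Classical.propDecidable

/-- The Brandt `λ⁰`-extension of a semigroup `S` with zero, with index set `I`: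
its elements are `0` (encoded `none`) and triples `(α, s, β)` with `s ≠ 0`. -/
def Brandt (I S : Type*) [Zero S] : Type _ := Option (I × {s : S // s ≠ 0} × I)

instance brandtZero {I S : Type*} [Zero S] : Zero (Brandt I S) := ⟨none⟩

/-- Multiplication on the Brandt `λ⁰`-extension. -/
noncomputable def brandtMul {I S : Type*} [Zero S] [Mul S] :
    Brandt I S → Brandt I S → Brandt I S
  | some (α, a, β), some (γ, b, δ) =>
      if h : β = γ ∧ a.1 * b.1 ≠ 0 then some (α, ⟨a.1 * b.1, h.2⟩, δ) else none
  | _, _ => none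

noncomputable instance brandtMulInst {I S : Type*} [Zero S] [Mul S] :
    Mul (Brandt I S) := ⟨brandtMul⟩

/-- The semigroup of `I × I`-matrix units. -/
def MatrixUnits (I : Type*) := Option (I × I)

instance muZero {I : Type*} : Zero (MatrixUnits I) := ⟨none⟩

noncomputable instance muMul {I : Type*} : Mul (MatrixUnits I) :=
  ⟨fun x y => match x, y with
    | some (a, b), some (c, d) => if b = c then some (a, d) else none
    | _, _ => none⟩

/-- The subset of `Brandt I S` induced by a subset `T ⊆ S`
(the Brandt extension of `T` inside that of `S`). -/
def brandtSet {I S : Type*} [Zero S] (T : Set S) : Set (Brandt I S) :=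
  {z | z = 0 ∨ ∃ (α β : I) (s : {s : S // s ≠ 0}), s.1 ∈ T ∧ z = some (α, s, β)}

/-- The map `B⁰_{λ₁}(S) → B⁰_{λ₂}(T)` induced by `h : S → T`, an index map `φ`
and families `u`, `v` (`v` playing the role of `a ↦ u(a)⁻¹`):
`(α,s,β) ↦ (φ α, u α · h s · v β, φ β)` when the middle entry is nonzero, else `0`. -/
noncomputable def brandtHomMap {I₁ I₂ S T : Type*} [Zero S] [Zero T] [Mul T]
    (φ : I₁ → I₂) (u v : I₁ → T) (h : S → T) : Brandt I₁ S → Brandt I₂ T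
  | some (a, s, b) =>
      if hh : u a * h s.1 * v b ≠ 0 then
        some (φ a, ⟨u a * h s.1 * v b, hh⟩, φ b) else none
  | none => none

/-- The canonical copy of `S` in `Brandt I S` at index `α` (the set `S_{α,α}`). -/
noncomputable def brandtIncl {I S : Type*} [Zero S] (α : I) : S → Brandt I S :=
  fun s => if h : s = 0 then 0 else some (α, ⟨s, h⟩, α)

/-- A nonzero triple of the Brandt extension, with honest type `Brandt I S`. -/
def tri {I S : Type*} [Zero S] (a : I) (s : {s : S // s ≠ 0}) (b : I) :
    Brandt I S := some (a, s, b)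

lemma brandt_mul_zero {I S : Type*} [Zero S] [Mul S] (x : Brandt I S) :
    x * (0 : Brandt I S) = 0 := by
  show brandtMul x none = none
  cases x <;> rfl

lemma brandt_zero_mul {I S : Type*} [Zero S] [Mul S] (x : Brandt I S) :
    (0 : Brandt I S) * x = 0 := rfl

lemma tri_mul_tri {I S : Type*} [Zero S] [Mul S] (a b c : I)
    (x y : {s : S // s ≠ 0}) (h : x.1 * y.1 ≠ 0) :
    tri a x b * tri b y c = tri a ⟨x.1 * y.1, h⟩ c := by
  show brandtMul _ _ = _
  show brandtMul (some (a, x, b)) (some (b, y, c)) = some (a, ⟨x.1 * y.1, h⟩, c)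
  exact dif_pos ⟨rfl, h⟩

/-- If `T` has the `B*`-property (contains no copy of the `2 × 2`-matrix
units), `σ : B⁰_{λ₁}(S) → B⁰_{λ₂}(T)` is a non-trivial homomorphism and
`σ(α,s,β) ≠ 0` for some `α, β`, then `σ(α₁,s,β₁) ≠ 0` for all `α₁, β₁`. -/
theorem brandt_hom_nonzero_everywhere {I J S T : Type*}
    [MonoidWithZero S] [MonoidWithZero T] [Nonempty I] (ι : I ↪ J)
    (σ : Brandt I S → Brandt J T) (hmul : ∀ x y, σ (x * y) = σ x * σ y)
    (hnt : ∃ x y, σ x ≠ σ y)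
    (hBstar : ¬∃ f : MatrixUnits (Fin 2) → T,
        Function.Injective f ∧ ∀ x y, f (x * y) = f x * f y)
    (α β : I) (s : {s : S // s ≠ 0})
    (hnz : σ (some (α, s, β)) ≠ 0) :
    ∀ α₁ β₁ : I, σ (some (α₁, s, β₁)) ≠ 0 := by
  have h1 : (1 : S) ≠ 0 := fun h => s.2 (by rw [← mul_one s.1, h, mul_zero])
  intro α₁ β₁ hcon
  apply hnz
  have e1 : tri α ⟨(1 : S), h1⟩ α₁ * tri α₁ s β₁ = tri α s β₁ := by
    rw [tri_mul_tri _ _ _ _ _ (by simpa using s.2)]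
    exact congrArg (fun t => tri α t β₁) (Subtype.ext (one_mul s.1))
  have e2 : tri α s β₁ * tri β₁ ⟨(1 : S), h1⟩ β = tri α s β := by
    rw [tri_mul_tri _ _ _ _ _ (by simpa using s.2)]
    exact congrArg (fun t => tri α t β) (Subtype.ext (mul_one s.1))
  have key : tri α s β = tri α ⟨(1 : S), h1⟩ α₁ * tri α₁ s β₁ * tri β₁ ⟨(1 : S), h1⟩ β := by
    rw [e1, e2]
  show σ (tri α s β) = 0
  have hc : σ (tri α₁ s β₁) = 0 := hcon
  rw [key, hmul, hmul, hc, brandt_mul_zero, brandt_zero_mul]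
end

section
/- Let S, T be monoids with zeros and λ₂ ≥ λ₁ ≥ 1. Suppose every idempotent of T lies in the center of T, T contains no copy of the I_{λ₁} × I_{λ₁}-matrix units semigroup, and T contains no copy of the 2×2-matrix units semigroup whose zero equals the zero of T. Then every non-trivial homomorphism σ : B⁰_{λ₁}(S) → B⁰_{λ₂}(T) has the form σ(α,s,β) = (φ(α), u(α)·h(s)·u(β)⁻¹, φ(β)) for s with h(s) ≠ 0_T, and σ(α,s,β) = 0₂ for h(s) = 0_T, and σ(0₁) = 0₂, where h : S → T is a homomorphism with h(0_S) = 0_T, φ : I_{λ₁} → I_{λ₂} is injective, and u : I_{λ₁} → H_e is a map into a maximal subgroup H_e of T at a non-zero idempotent e. -/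
attribute [local instance] Classical.propDecidable

/-- The non-zero element `(α, s, β)` of `Brandt I S`. -/
def brandtElt {I S : Type*} [Zero S] (α : I) (s : {s : S // s ≠ 0}) (β : I) :
    Brandt I S := some (α, s, β)

/- ============ auxiliary lemmas ============= -/
set_option linter.unusedSectionVars false

section BrandtAux
variable {I S : Type*} [Zero S] [Mul S]

theorem Brandt.cases (x : Brandt I S) : x = 0 ∨ ∃ a s b, x = brandtElt a s b := by
  cases x with
  | none => exact Or.inl rfl
  | some p => exact Or.inr ⟨p.1, p.2.1, p.2.2, rfl⟩

theorem Brandt.zero_mul (x : Brandt I S) : (0 : Brandt I S) * x = 0 := by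
  show brandtMul none x = none
  cases x with
  | none => rfl
  | some p => obtain ⟨a, s, b⟩ := p; rfl

theorem Brandt.mul_zero (x : Brandt I S) : x * (0 : Brandt I S) = 0 := by
  show brandtMul x none = none
  cases x with
  | none => rfl
  | some p => obtain ⟨a, s, b⟩ := p; rfl

theorem Brandt.elt_mul_elt (α β γ δ : I) (a b : {s : S // s ≠ 0}) :
    brandtElt α a β * brandtElt (S := S) γ b δ =
      if h : β = γ ∧ a.1 * b.1 ≠ 0 then brandtElt α ⟨a.1 * b.1, h.2⟩ δ else 0 := rfl

theorem Brandt.elt_ne_zero (α β : I) (a : {s : S // s ≠ 0}) :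
    brandtElt α a β ≠ (0 : Brandt I S) := fun h => Option.some_ne_none _ h

theorem Brandt.elt_inj {α β γ δ : I} {a b : {s : S // s ≠ 0}} :
    brandtElt (S := S) α a β = brandtElt γ b δ ↔ α = γ ∧ a = b ∧ β = δ := by
  constructor
  · intro h
    have := Option.some_injective _ h
    exact ⟨congrArg Prod.fst this, congrArg (fun p => p.2.1) this,
      congrArg (fun p => p.2.2) this⟩
  · rintro ⟨rfl, rfl, rfl⟩; rfl

theorem Brandt.elt_mul_elt_eq_elt {α β γ δ p q : I} {a b c : {s : S // s ≠ 0}} :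
    brandtElt α a β * brandtElt (S := S) γ b δ = brandtElt p c q ↔
      β = γ ∧ α = p ∧ δ = q ∧ a.1 * b.1 = c.1 := by
  rw [Brandt.elt_mul_elt]
  constructor
  · intro h
    split_ifs at h with hc
    · obtain ⟨h1, h2, h3⟩ := Brandt.elt_inj.mp h
      exact ⟨hc.1, h1, h3, congrArg Subtype.val h2⟩
    · exact absurd h.symm (Brandt.elt_ne_zero _ _ _)
  · rintro ⟨rfl, rfl, rfl, hab⟩
    rw [dif_pos ⟨rfl, hab ▸ c.2⟩]
    exact Brandt.elt_inj.mpr ⟨rfl, Subtype.ext hab, rfl⟩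

theorem Brandt.elt_mul_elt_eq_zero {α β γ δ : I} {a b : {s : S // s ≠ 0}} :
    brandtElt α a β * brandtElt (S := S) γ b δ = 0 ↔ (β ≠ γ ∨ a.1 * b.1 = 0) := by
  rw [Brandt.elt_mul_elt]
  split_ifs with hc
  · simp only [Brandt.elt_ne_zero, false_iff]
    push_neg
    exact ⟨hc.1, hc.2⟩
  · simp only [eq_self_iff_true, true_iff]
    by_contra hcon
    push_neg at hcon
    exact hc ⟨hcon.1, hcon.2⟩

end BrandtAux

/- ====== unit elements in Brandt extension ====== -/
section Eunit
variable {I S : Type*} [MulZeroOneClass S]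

def Eunit (h1 : (1 : S) ≠ 0) (a b : I) : Brandt I S := brandtElt a ⟨1, h1⟩ b

theorem Eunit_mul (h1 : (1 : S) ≠ 0) (a b c : I) :
    Eunit (I := I) h1 a b * Eunit h1 b c = Eunit h1 a c := by
  show brandtElt a ⟨1, h1⟩ b * brandtElt b ⟨1, h1⟩ c = brandtElt a ⟨1, h1⟩ c
  exact Brandt.elt_mul_elt_eq_elt.mpr ⟨rfl, rfl, rfl, one_mul 1⟩

theorem Eunit_mul_ne (h1 : (1 : S) ≠ 0) {b c : I} (a d : I) (hbc : b ≠ c) :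
    Eunit (I := I) h1 a b * Eunit h1 c d = 0 :=
  Brandt.elt_mul_elt_eq_zero.mpr (Or.inl hbc)

theorem Eunit_mul_elt (h1 : (1 : S) ≠ 0) (a c b : I) (s : {s : S // s ≠ 0}) :
    Eunit h1 a c * brandtElt c s b = brandtElt a s b :=
  Brandt.elt_mul_elt_eq_elt.mpr ⟨rfl, rfl, rfl, one_mul s.1⟩

theorem elt_mul_Eunit (h1 : (1 : S) ≠ 0) (a d b : I) (s : {s : S // s ≠ 0}) :
    brandtElt a s d * Eunit h1 d b = brandtElt a s b :=
  Brandt.elt_mul_elt_eq_elt.mpr ⟨rfl, rfl, rfl, mul_one s.1⟩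

theorem Eunit_sandwich (h1 : (1 : S) ≠ 0) (a b c d : I) (s : {s : S // s ≠ 0}) :
    Eunit h1 a c * (brandtElt c s d * Eunit h1 d b) = brandtElt a s b := by
  rw [elt_mul_Eunit h1, Eunit_mul_elt h1]

end Eunit

/- ====== matrix units auxiliary ====== -/
section MU
variable {I T : Type*}

def muElt (a b : I) : MatrixUnits I := some (a, b)

theorem mu_cases (x : MatrixUnits I) : x = 0 ∨ ∃ a b, x = muElt a b := by
  cases x with
  | none => exact Or.inl rfl
  | some p => exact Or.inr ⟨p.1, p.2, rfl⟩

theorem mu_zero_mul (x : MatrixUnits I) : (0 : MatrixUnits I) * x = 0 := by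
  show muMul.mul none x = none
  cases x with
  | none => rfl
  | some p => obtain ⟨a, b⟩ := p; rfl

theorem mu_mul_zero (x : MatrixUnits I) : x * (0 : MatrixUnits I) = 0 := by
  show muMul.mul x none = none
  cases x with
  | none => rfl
  | some p => obtain ⟨a, b⟩ := p; rfl

theorem muElt_mul (a b c d : I) :
    muElt a b * muElt c d = if b = c then muElt a d else (0 : MatrixUnits I) := rfl

theorem muElt_ne_zero (a b : I) : muElt a b ≠ (0 : MatrixUnits I) :=
  fun h => Option.some_ne_none _ h

theorem muElt_inj {a b c d : I} : muElt a b = muElt c d ↔ a = c ∧ b = d := by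
  constructor
  · intro h
    have := Option.some_injective _ h
    exact ⟨congrArg Prod.fst this, congrArg Prod.snd this⟩
  · rintro ⟨rfl, rfl⟩; rfl

/-- the function `MatrixUnits I → T` determined by `t` at zero and `w` on pairs. -/
def muMap (t : T) (w : I → I → T) : MatrixUnits I → T
  | some p => w p.1 p.2
  | none => t

theorem muMap_zero (t : T) (w : I → I → T) : muMap t w 0 = t := rfl

theorem muMap_elt (t : T) (w : I → I → T) (a b : I) : muMap t w (muElt a b) = w a b := rfl

theorem muMap_mul [Mul T] (t : T) (w : I → I → T)
    (hm : ∀ a b c, w a b * w b c = w a c)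
    (hz : ∀ a b c d, b ≠ c → w a b * w c d = t)
    (hwt : ∀ a b, w a b * t = t) (htw : ∀ a b, t * w a b = t) (htt : t * t = t) :
    ∀ x y, muMap t w (x * y) = muMap t w x * muMap t w y := by
  intro x y
  rcases mu_cases x with rfl | ⟨a, b, rfl⟩ <;> rcases mu_cases y with rfl | ⟨c, d, rfl⟩
  · rw [mu_zero_mul, muMap_zero]; exact htt.symm
  · rw [mu_zero_mul, muMap_zero, muMap_elt]; exact (htw c d).symm
  · rw [mu_mul_zero, muMap_zero, muMap_elt]; exact (hwt a b).symm
  · rw [muElt_mul]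
    by_cases hbc : b = c
    · subst hbc
      rw [if_pos rfl, muMap_elt, muMap_elt, muMap_elt, hm]
    · rw [if_neg hbc, muMap_zero, muMap_elt, muMap_elt, hz _ _ _ _ hbc]

theorem muMap_inj (t : T) (w : I → I → T)
    (hne : ∀ a b, w a b ≠ t)
    (hpair : ∀ a b c d, ¬(a = c ∧ b = d) → w a b ≠ w c d) :
    Function.Injective (muMap t w) := by
  intro x y hxy
  rcases mu_cases x with rfl | ⟨a, b, rfl⟩ <;> rcases mu_cases y with rfl | ⟨c, d, rfl⟩
  · rfl
  · rw [muMap_zero, muMap_elt] at hxy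
    exact absurd hxy.symm (hne c d)
  · rw [muMap_zero, muMap_elt] at hxy
    exact absurd hxy (hne a b)
  · rw [muMap_elt, muMap_elt] at hxy
    by_cases h : a = c ∧ b = d
    · exact muElt_inj.mpr h
    · exact absurd hxy (hpair _ _ _ _ h)

end MU

theorem brandtHomMap_elt {I₁ I₂ S T : Type*} [Zero S] [Zero T] [Mul T]
    (φ : I₁ → I₂) (u v : I₁ → T) (h : S → T) (a : I₁) (s : {s : S // s ≠ 0}) (b : I₁) :
    brandtHomMap φ u v h (brandtElt a s b) =
      if hh : u a * h s.1 * v b ≠ 0 then brandtElt (φ a) ⟨u a * h s.1 * v b, hh⟩ (φ b)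
      else 0 := rfl

theorem brandt_main {I₁ I₂ S T : Type*}
    [MonoidWithZero S] [MonoidWithZero T] [Nonempty I₁]
    (h1 : (1 : S) ≠ 0)
    (hcentral : ∀ e : T, e * e = e → ∀ x : T, e * x = x * e)
    (hno1 : ¬∃ f : MatrixUnits I₁ → T,
        Function.Injective f ∧ ∀ x y, f (x * y) = f x * f y)
    (hno2 : ¬∃ f : MatrixUnits (Fin 2) → T,
        Function.Injective f ∧ (∀ x y, f (x * y) = f x * f y) ∧ f 0 = 0)
    (σ : Brandt I₁ S → Brandt I₂ T)
    (hmul : ∀ x y, σ (x * y) = σ x * σ y)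
    (hnt : ∃ x y, σ x ≠ σ y) :
    ∃ (h : S → T) (φ : I₁ → I₂) (e : T) (u v : I₁ → T),
      (∀ s t : S, h (s * t) = h s * h t) ∧ h 0 = 0 ∧
      Function.Injective φ ∧
      e * e = e ∧ e ≠ 0 ∧
      (∀ a : I₁, u a * e = u a ∧ e * u a = u a ∧ v a * e = v a ∧ e * v a = v a ∧
        u a * v a = e ∧ v a * u a = e) ∧
      σ = brandtHomMap φ u v h := by
  classical
  obtain ⟨x₀, y₀, hxy⟩ := hnt
  have O : I₁ := Classical.arbitrary I₁
  -- Step 1: if σ sends some matrix unit to σ 0, then σ is constant (contradiction).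
  have hcoll : ∀ a b : I₁, σ (Eunit h1 a b) ≠ σ 0 := by
    intro a b hab
    apply hxy
    have hE0 : ∀ c d : I₁, σ (Eunit h1 c d) = σ 0 := by
      intro c d
      have e1 : Eunit (I := I₁) h1 c d = Eunit h1 c a * (Eunit h1 a b * Eunit h1 b d) := by
        rw [Eunit_mul, Eunit_mul]
      rw [e1, hmul, hmul, hab, ← hmul, ← hmul, Brandt.zero_mul, Brandt.mul_zero]
    have hconst : ∀ x : Brandt I₁ S, σ x = σ 0 := by
      intro x
      rcases Brandt.cases x with rfl | ⟨c, s, d, rfl⟩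
      · rfl
      · have e2 : brandtElt c s d = Eunit h1 c c * (brandtElt c s d * Eunit h1 d d) :=
          (Eunit_sandwich h1 c d c d s).symm
        rw [e2, hmul, hE0 c c, ← hmul, Brandt.zero_mul]
    rw [hconst x₀, hconst y₀]
  -- Step 2: σ 0 = 0.
  have hz0 : σ (0 : Brandt I₁ S) = 0 := by
    rcases Brandt.cases (σ (0 : Brandt I₁ S)) with h | ⟨p, t, q, hσ0⟩
    · exact h
    exfalso
    have h00 : σ (0 : Brandt I₁ S) = σ 0 * σ 0 := by
      rw [← hmul, Brandt.zero_mul]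
    rw [hσ0] at h00
    obtain ⟨hqp, -, -, htt⟩ := Brandt.elt_mul_elt_eq_elt.mp h00.symm
    subst hqp
    have habsR : ∀ x, σ x * σ 0 = σ 0 := fun x => by rw [← hmul, Brandt.mul_zero]
    have habsL : ∀ x, σ 0 * σ x = σ 0 := fun x => by rw [← hmul, Brandt.zero_mul]
    have hshape : ∀ a b : I₁, ∃ s : {s : T // s ≠ 0},
        σ (Eunit h1 a b) = brandtElt q s q ∧ s.1 * t.1 = t.1 ∧ t.1 * s.1 = t.1 := by
      intro a b
      rcases Brandt.cases (σ (Eunit h1 a b)) with h | ⟨r, s, r', hsr⟩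
      · exfalso
        have hh := habsR (Eunit h1 a b)
        rw [h, Brandt.zero_mul, hσ0] at hh
        exact Brandt.elt_ne_zero _ _ _ hh.symm
      · have hr := habsR (Eunit h1 a b)
        rw [hsr, hσ0] at hr
        obtain ⟨hr'p, hrp, -, hst⟩ := Brandt.elt_mul_elt_eq_elt.mp hr
        have hl := habsL (Eunit h1 a b)
        rw [hsr, hσ0] at hl
        obtain ⟨-, -, -, hts⟩ := Brandt.elt_mul_elt_eq_elt.mp hl
        exact ⟨s, by rw [hsr, hrp, hr'p], hst, hts⟩
    choose w hw1 hw2 hw3 using hshape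
    have hwm : ∀ a b c : I₁, (w a b).1 * (w b c).1 = (w a c).1 := by
      intro a b c
      have hh := hmul (Eunit h1 a b) (Eunit h1 b c)
      rw [Eunit_mul, hw1, hw1, hw1] at hh
      exact (Brandt.elt_mul_elt_eq_elt.mp hh.symm).2.2.2
    have hwt : ∀ a b c d : I₁, b ≠ c → (w a b).1 * (w c d).1 = t.1 := by
      intro a b c d hbc
      have hh := hmul (Eunit h1 a b) (Eunit h1 c d)
      rw [Eunit_mul_ne h1 a d hbc, hw1, hw1, hσ0] at hh
      exact (Brandt.elt_mul_elt_eq_elt.mp hh.symm).2.2.2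
    have hwnet : ∀ a b : I₁, (w a b).1 ≠ t.1 := by
      intro a b h
      apply hcoll a b
      rw [hw1, hσ0]
      exact Brandt.elt_inj.mpr ⟨rfl, Subtype.ext h, rfl⟩
    have hwpair : ∀ a b c d : I₁, ¬(a = c ∧ b = d) → (w a b).1 ≠ (w c d).1 := by
      intro a b c d hne heq
      by_cases hbd : b = d
      · subst hbd
        have hac : a ≠ c := fun h => hne ⟨h, rfl⟩
        have e1 : (w a a).1 * (w a b).1 = (w a b).1 := hwm a a b
        have e2 : (w a a).1 * (w c b).1 = t.1 := hwt a a c b hac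
        rw [← heq] at e2
        exact hwnet a b (e1.symm.trans e2)
      · have e1 : (w a b).1 * (w b b).1 = (w a b).1 := hwm a b b
        have e2 : (w c d).1 * (w b b).1 = t.1 := hwt c d b b (fun h => hbd h.symm)
        rw [← heq] at e2
        exact hwnet a b (e1.symm.trans e2)
    exact hno1 ⟨muMap t.1 (fun a b => (w a b).1),
      muMap_inj _ _ hwnet hwpair,
      muMap_mul _ _ hwm hwt (fun a b => hw2 a b) (fun a b => hw3 a b) htt⟩
  -- Step 3: the images of the matrix units.
  have hEnz : ∀ a b : I₁, ∃ pwq : I₂ × {t : T // t ≠ 0} × I₂,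
      σ (Eunit h1 a b) = brandtElt pwq.1 pwq.2.1 pwq.2.2 := by
    intro a b
    rcases Brandt.cases (σ (Eunit h1 a b)) with h | ⟨p, s, q, h⟩
    · exact absurd (h.trans hz0.symm) (hcoll a b)
    · exact ⟨(p, s, q), h⟩
  choose triple htriple using hEnz
  have hprod : ∀ a b c : I₁,
      (triple a b).2.2 = (triple b c).1 ∧ (triple a b).1 = (triple a c).1 ∧
      (triple b c).2.2 = (triple a c).2.2 ∧
      ((triple a b).2.1).1 * ((triple b c).2.1).1 = ((triple a c).2.1).1 := by
    intro a b c
    have hh := hmul (Eunit h1 a b) (Eunit h1 b c)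
    rw [Eunit_mul, htriple, htriple, htriple] at hh
    exact Brandt.elt_mul_elt_eq_elt.mp hh.symm
  set φ : I₁ → I₂ := fun a => (triple a a).1 with hφdef
  set W : I₁ → I₁ → {t : T // t ≠ 0} := fun a b => (triple a b).2.1 with hWdef
  have hσE : ∀ a b : I₁, σ (Eunit h1 a b) = brandtElt (φ a) (W a b) (φ b) := by
    intro a b
    rw [htriple]
    have e1 : (triple a b).1 = φ a := (hprod a b a).2.1
    have e2 : (triple a b).2.2 = φ b := (hprod a b b).1
    rw [e1, e2]
  have hWm : ∀ a b c : I₁, (W a b).1 * (W b c).1 = (W a c).1 := fun a b c =>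
    (hprod a b c).2.2.2
  have hWz : ∀ a b c d : I₁, b ≠ c → φ b = φ c → (W a b).1 * (W c d).1 = 0 := by
    intro a b c d hbc hφbc
    have hh := hmul (Eunit h1 a b) (Eunit h1 c d)
    rw [Eunit_mul_ne h1 a d hbc, hz0, hσE, hσE] at hh
    rcases Brandt.elt_mul_elt_eq_zero.mp hh.symm with h | h
    · exact absurd hφbc h
    · exact h
  -- Step 4: φ is injective.
  have hφinj : Function.Injective φ := by
    intro b c hbc
    by_contra hne
    apply hno2
    have hkey : ∀ i j : Fin 2, i ≠ j → (![b, c] i ≠ ![b, c] j ∧ φ (![b, c] i) = φ (![b, c] j)) := by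
      intro i j hij
      fin_cases i <;> fin_cases j <;>
        first
          | exact absurd rfl hij
          | exact ⟨hne, hbc⟩
          | exact ⟨fun h => hne h.symm, hbc.symm⟩
    refine ⟨muMap (0 : T) (fun i j => (W (![b, c] i) (![b, c] j)).1), ?_, ?_, rfl⟩
    · apply muMap_inj
      · exact fun i j => (W _ _).2
      · intro i j k l hnepair heq
        by_cases hjl : j = l
        · subst hjl
          have hik : i ≠ k := fun h => hnepair ⟨h, rfl⟩
          have e1 : (W (![b, c] i) (![b, c] i)).1 * (W (![b, c] i) (![b, c] j)).1
              = (W (![b, c] i) (![b, c] j)).1 := hWm _ _ _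
          have e2 : (W (![b, c] i) (![b, c] i)).1 * (W (![b, c] k) (![b, c] j)).1 = 0 :=
            hWz _ _ _ _ (hkey i k hik).1 (hkey i k hik).2
          rw [← heq] at e2
          exact (W (![b, c] i) (![b, c] j)).2 (e1.symm.trans e2)
        · have e1 : (W (![b, c] i) (![b, c] j)).1 * (W (![b, c] j) (![b, c] j)).1
              = (W (![b, c] i) (![b, c] j)).1 := hWm _ _ _
          have e2 : (W (![b, c] k) (![b, c] l)).1 * (W (![b, c] j) (![b, c] j)).1 = 0 :=
            hWz _ _ _ _ (hkey l j (fun h => hjl h.symm)).1 (hkey l j (fun h => hjl h.symm)).2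
          rw [← heq] at e2
          exact (W (![b, c] i) (![b, c] j)).2 (e1.symm.trans e2)
    · apply muMap_mul
      · exact fun i j k => hWm _ _ _
      · exact fun i j k l hjk => hWz _ _ _ _ (hkey j k hjk).1 (hkey j k hjk).2
      · exact fun i j => mul_zero _
      · exact fun i j => zero_mul _
      · exact zero_mul 0
  -- Step 5: the group data.
  set e : T := (W O O).1 with hedef
  set u : I₁ → T := fun a => (W a O).1 with hudef
  set v : I₁ → T := fun a => (W O a).1 with hvdef
  have he : e * e = e := hWm O O O
  have he0 : e ≠ 0 := (W O O).2
  have hue : ∀ a, u a * e = u a := fun a => hWm a O O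
  have hev : ∀ a, e * v a = v a := fun a => hWm O O a
  have hvu : ∀ a, v a * u a = e := fun a => hWm O a O
  have heu : ∀ a, e * u a = u a := fun a => (hcentral e he (u a)).trans (hue a)
  have hve : ∀ a, v a * e = v a := fun a => (hcentral e he (v a)).symm.trans (hev a)
  have hWaa : ∀ a, (W a a).1 = e := by
    intro a
    have hea : (W a a).1 * (W a a).1 = (W a a).1 := hWm a a a
    have h2 : (W a a).1 * u a = u a := hWm a a O
    have h3 : u a * (W a a).1 = u a := (hcentral _ hea (u a)).symm.trans h2
    have h5 : (W a a).1 * e = (W a a).1 := by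
      have huvW : (W a a).1 = u a * v a := (hWm a O a).symm
      rw [huvW, mul_assoc, hve]
    have h4 : e * (W a a).1 = e := by rw [← hvu a, mul_assoc, h3]
    calc (W a a).1 = (W a a).1 * e := h5.symm
      _ = e * (W a a).1 := (hcentral e he _).symm
      _ = e := h4
  have huv : ∀ a, u a * v a = e := fun a => (hWm a O a).trans (hWaa a)
  -- Step 6: shape of diagonal images.
  have hXshape : ∀ (s : {s : S // s ≠ 0}),
      σ (brandtElt O s O) = 0 ∨ ∃ t : {t : T // t ≠ 0},
        σ (brandtElt O s O) = brandtElt (φ O) t (φ O) ∧ e * t.1 = t.1 ∧ t.1 * e = t.1 := by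
    intro s
    rcases Brandt.cases (σ (brandtElt O s O)) with h | ⟨p, t, q, hX⟩
    · exact Or.inl h
    right
    have hl := hmul (Eunit h1 O O) (brandtElt O s O)
    rw [Eunit_mul_elt, hσE, hX] at hl
    have hr := hmul (brandtElt O s O) (Eunit h1 O O)
    rw [elt_mul_Eunit, hσE, hX] at hr
    obtain ⟨hp, -, -, het⟩ := Brandt.elt_mul_elt_eq_elt.mp hl.symm
    obtain ⟨hq, -, -, hte⟩ := Brandt.elt_mul_elt_eq_elt.mp hr.symm
    exact ⟨t, by rw [hX]; exact Brandt.elt_inj.mpr ⟨hp.symm, rfl, hq⟩, het, hte⟩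
  -- Step 7: the homomorphism h.
  have hhex : ∀ s : S, ∃ t : T, (s = 0 → t = 0) ∧
      ∀ hs : s ≠ 0, (t = 0 ∧ σ (brandtElt O ⟨s, hs⟩ O) = 0) ∨
        ∃ ht : t ≠ 0, σ (brandtElt O ⟨s, hs⟩ O) = brandtElt (φ O) ⟨t, ht⟩ (φ O) ∧
          e * t = t ∧ t * e = t := by
    intro s
    by_cases hs0 : s = 0
    · exact ⟨0, fun _ => rfl, fun hs => absurd hs0 hs⟩
    · rcases hXshape ⟨s, hs0⟩ with h | ⟨t, ht1, ht2, ht3⟩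
      · exact ⟨0, fun h' => absurd h' hs0, fun hs => Or.inl ⟨rfl, h⟩⟩
      · exact ⟨t.1, fun h' => absurd h' hs0, fun hs => Or.inr ⟨t.2, ht1, ht2, ht3⟩⟩
  choose h hh0 hhs using hhex
  -- Step 8: the main formula.
  have hmain : ∀ (a b : I₁) (s : {s : S // s ≠ 0}),
      σ (brandtElt a s b) =
        if hne : u a * h s.1 * v b ≠ 0 then brandtElt (φ a) ⟨u a * h s.1 * v b, hne⟩ (φ b)
        else 0 := by
    intro a b s
    obtain ⟨s, hs⟩ := s
    have hdec : brandtElt a (⟨s, hs⟩ : {s : S // s ≠ 0}) b =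
        Eunit h1 a O * (brandtElt O ⟨s, hs⟩ O * Eunit h1 O b) :=
      (Eunit_sandwich h1 a b O O ⟨s, hs⟩).symm
    rw [hdec, hmul, hmul, hσE, hσE]
    rcases hhs s hs with ⟨ht0, hσs⟩ | ⟨ht, hσs, het, hte⟩
    · rw [hσs, Brandt.zero_mul, Brandt.mul_zero, ht0]
      rw [dif_neg (fun hC => hC (by rw [mul_zero, zero_mul]))]
    · rw [hσs]
      have htv : h s * v b ≠ 0 := by
        intro h0
        apply ht
        rw [← hte, ← hvu b, ← mul_assoc, h0, zero_mul]
      have huhv : u a * (h s * v b) ≠ 0 := by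
        intro h0
        apply htv
        have h2 : e * (h s * v b) = h s * v b := by rw [← mul_assoc, het]
        rw [← h2, ← hvu a, mul_assoc, h0, mul_zero]
      have hstep1 : brandtElt (φ O) (⟨h s, ht⟩ : {t : T // t ≠ 0}) (φ O) *
            brandtElt (φ O) (W O b) (φ b) = brandtElt (φ O) ⟨h s * v b, htv⟩ (φ b) :=
        Brandt.elt_mul_elt_eq_elt.mpr ⟨rfl, rfl, rfl, rfl⟩
      rw [hstep1]
      have hstep2 : brandtElt (φ a) (W a O) (φ O) *
            brandtElt (φ O) (⟨h s * v b, htv⟩ : {t : T // t ≠ 0}) (φ b) =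
            brandtElt (φ a) ⟨u a * (h s * v b), huhv⟩ (φ b) :=
        Brandt.elt_mul_elt_eq_elt.mpr ⟨rfl, rfl, rfl, rfl⟩
      rw [hstep2]
      have hne : u a * h s * v b ≠ 0 := by rw [mul_assoc]; exact huhv
      rw [dif_pos hne]
      exact Brandt.elt_inj.mpr ⟨rfl, Subtype.ext (mul_assoc _ _ _).symm, rfl⟩
  -- Step 9: h is multiplicative.
  have hhmul : ∀ s t' : S, h (s * t') = h s * h t' := by
    intro s t'
    by_cases hs0 : s = 0
    · subst hs0
      rw [zero_mul, hh0 0 rfl, zero_mul]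
    by_cases ht0 : t' = 0
    · subst ht0
      rw [mul_zero, hh0 0 rfl, mul_zero]
    have key := hmul (brandtElt O ⟨s, hs0⟩ O) (brandtElt O ⟨t', ht0⟩ O)
    by_cases hst : s * t' = 0
    · have hxy' : brandtElt O (⟨s, hs0⟩ : {s : S // s ≠ 0}) O *
          brandtElt O (⟨t', ht0⟩ : {s : S // s ≠ 0}) O = 0 :=
        Brandt.elt_mul_elt_eq_zero.mpr (Or.inr hst)
      rw [hxy', hz0] at key
      have hzz : h s * h t' = 0 := by
        rcases hhs s hs0 with ⟨h10, -⟩ | ⟨h1t, hσ1, -, -⟩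
        · rw [h10, zero_mul]
        rcases hhs t' ht0 with ⟨h20, -⟩ | ⟨h2t, hσ2, -, -⟩
        · rw [h20, mul_zero]
        rw [hσ1, hσ2] at key
        rcases Brandt.elt_mul_elt_eq_zero.mp key.symm with hc | hc
        · exact absurd rfl hc
        · exact hc
      rw [hh0 (s * t') hst, hzz]
    · have hxy' : brandtElt O (⟨s, hs0⟩ : {s : S // s ≠ 0}) O *
          brandtElt O (⟨t', ht0⟩ : {s : S // s ≠ 0}) O = brandtElt O ⟨s * t', hst⟩ O :=
        Brandt.elt_mul_elt_eq_elt.mpr ⟨rfl, rfl, rfl, rfl⟩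
      rw [hxy'] at key
      rcases hhs (s * t') hst with ⟨h30, hσ3⟩ | ⟨h3t, hσ3, -, -⟩
      · rw [hσ3] at key
        rw [h30]
        rcases hhs s hs0 with ⟨h10, -⟩ | ⟨h1t, hσ1, -, -⟩
        · rw [h10, zero_mul]
        rcases hhs t' ht0 with ⟨h20, -⟩ | ⟨h2t, hσ2, -, -⟩
        · rw [h20, mul_zero]
        rw [hσ1, hσ2] at key
        rcases Brandt.elt_mul_elt_eq_zero.mp key.symm with hc | hc
        · exact absurd rfl hc
        · exact hc.symm
      · rw [hσ3] at key
        rcases hhs s hs0 with ⟨h10, hσ1⟩ | ⟨h1t, hσ1, -, -⟩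
        · rw [hσ1, Brandt.zero_mul] at key
          exact absurd key (Brandt.elt_ne_zero _ _ _)
        rcases hhs t' ht0 with ⟨h20, hσ2⟩ | ⟨h2t, hσ2, -, -⟩
        · rw [hσ2, Brandt.mul_zero] at key
          exact absurd key (Brandt.elt_ne_zero _ _ _)
        rw [hσ1, hσ2] at key
        obtain ⟨-, -, -, hval⟩ := Brandt.elt_mul_elt_eq_elt.mp key.symm
        exact hval.symm
  -- Final assembly.
  refine ⟨h, φ, e, u, v, hhmul, hh0 0 rfl, hφinj, he, he0,
    fun a => ⟨hue a, heu a, hve a, hev a, huv a, hvu a⟩, ?_⟩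
  funext x
  rcases Brandt.cases x with rfl | ⟨a, s, b, rfl⟩
  · rw [hz0]; rfl
  · rw [hmain a b s]
    show _ = brandtHomMap φ u v h (brandtElt a s b)
    rw [brandtHomMap_elt]

/-- If every idempotent of `T` is central, `T` contains no copy of the
`I₁ × I₁`-matrix units and no copy of the `2 × 2`-matrix units with zero the zero of
`T`, then every non-trivial homomorphism `σ : B⁰_{λ₁}(S) → B⁰_{λ₂}(T)` is of the form
`brandtHomMap φ u v h` for a zero-preserving homomorphism `h : S → T`, an injection
`φ`, and a map `u` (with inverses `v`) into a maximal subgroup `H_e` at a nonzero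
idempotent `e`. -/
theorem brandt_hom_classification {I₁ I₂ S T : Type*}
    [MonoidWithZero S] [MonoidWithZero T] [Nonempty I₁] (ι : I₁ ↪ I₂)
    (hcentral : ∀ e : T, e * e = e → ∀ x : T, e * x = x * e)
    (hno1 : ¬∃ f : MatrixUnits I₁ → T,
        Function.Injective f ∧ ∀ x y, f (x * y) = f x * f y)
    (hno2 : ¬∃ f : MatrixUnits (Fin 2) → T,
        Function.Injective f ∧ (∀ x y, f (x * y) = f x * f y) ∧ f 0 = 0)
    (σ : Brandt I₁ S → Brandt I₂ T)
    (hmul : ∀ x y, σ (x * y) = σ x * σ y)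
    (hnt : ∃ x y, σ x ≠ σ y) :
    ∃ (h : S → T) (φ : I₁ → I₂) (e : T) (u v : I₁ → T),
      (∀ s t : S, h (s * t) = h s * h t) ∧ h 0 = 0 ∧
      Function.Injective φ ∧
      e * e = e ∧ e ≠ 0 ∧
      (∀ a : I₁, u a * e = u a ∧ e * u a = u a ∧ v a * e = v a ∧ e * v a = v a ∧
        u a * v a = e ∧ v a * u a = e) ∧
      σ = brandtHomMap φ u v h := by
  classical
  by_cases h1 : (1 : S) = 0
  · exfalso
    obtain ⟨x, y, hxy⟩ := hnt
    have hall : ∀ z : Brandt I₁ S, z = 0 := by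
      intro z
      rcases Brandt.cases z with rfl | ⟨a, s, b, rfl⟩
      · rfl
      · have hs : s.1 = 0 := by rw [← mul_one s.1, h1, mul_zero]
        exact absurd hs s.2
    exact hxy (by rw [hall x, hall y])
  · exact brandt_main h1 hcentral hno1 hno2 σ hmul hnt
end
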